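/- An n × n complex matrix is complex doubly substochastic if and only if it lies in the convex hull of the matrices M_{π,γ}, where π ranges over permutations of {1,…,n} and γ over vectors of unimodular complex numbers, and M_{π,γ} has entry γ_j at position (j, π(j)) and zeros elsewhere. -/

import Mathlib

/-- A complex square matrix is complex doubly substochastic (cdss) if every
row and every column has ℓ¹-sum of absolute values at most 1. -/
def IsCdss {n : ℕ} (M : Matrix (Fin n) (Fin n) ℂ) : Prop :=
  (∀ i, ∑ j, ‖M i j‖ ≤ 1) ∧ (∀ j, ∑ i, ‖M i j‖ ≤ 1)

/-- The set of "complex permutation matrices" generating the hull. -/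
def CdssGen (n : ℕ) : Set (Matrix (Fin n) (Fin n) ℂ) :=
  {N : Matrix (Fin n) (Fin n) ℂ |
    ∃ (π : Equiv.Perm (Fin n)) (γ : Fin n → ℂ),
      (∀ j, ‖γ j‖ = 1) ∧ N = fun j k => if k = π j then γ j else 0}

/-- Any injection defined on a subset of a fintype extends to a permutation. -/
lemma exists_perm_extend {n : ℕ} (s : Finset (Fin n)) (f : Fin n → Fin n)
    (hf : Set.InjOn f s) : ∃ π : Equiv.Perm (Fin n), ∀ j ∈ s, π j = f j := by
  classical
  set t : Finset (Fin n) := s.image f with ht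
  have hcard : t.card = s.card := Finset.card_image_of_injOn hf
  have hccard : Fintype.card (↥(sᶜ : Finset (Fin n))) = Fintype.card (↥(tᶜ : Finset (Fin n))) := by
    simp [Finset.card_compl, hcard]
  let e := Fintype.equivOfCardEq hccard
  let g : Fin n → Fin n := fun j => if h : j ∈ s then f j else (e ⟨j, by simpa using h⟩ : Fin n)
  have hginj : Function.Injective g := by
    intro a b hab
    by_cases ha : a ∈ s <;> by_cases hb : b ∈ s <;> simp only [g, ha, hb, dif_pos, dif_neg,
      not_false_iff] at hab
    · exact hf ha hb hab
    · exfalso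
      have h1 : f a ∈ t := Finset.mem_image_of_mem f ha
      have h2 : (e ⟨b, by simpa using hb⟩ : Fin n) ∈ tᶜ := (e ⟨b, by simpa using hb⟩).2
      rw [← hab] at h2
      exact (Finset.mem_compl.mp h2) h1
    · exfalso
      have h1 : f b ∈ t := Finset.mem_image_of_mem f hb
      have h2 : (e ⟨a, by simpa using ha⟩ : Fin n) ∈ tᶜ := (e ⟨a, by simpa using ha⟩).2
      rw [hab] at h2
      exact (Finset.mem_compl.mp h2) h1
    · have := e.injective (Subtype.ext hab)
      simpa using congrArg Subtype.val this
  refine ⟨Equiv.ofBijective g (Finite.injective_iff_bijective.mp hginj), fun j hj => ?_⟩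
  simp [g, hj]

/-- A partial complex permutation matrix (unimodular entries on a partial injection)
lies in the convex hull of the generators. -/
lemma partial_mem_hull {n : ℕ} (s : Finset (Fin n)) (f : Fin n → Fin n)
    (hf : Set.InjOn f s) (u : Fin n → ℂ) (hu : ∀ j, ‖u j‖ = 1) :
    (fun j k => if j ∈ s ∧ k = f j then u j else 0) ∈ convexHull ℝ (CdssGen n) := by
  classical
  obtain ⟨π, hπ⟩ := exists_perm_extend s f hf
  let γp : Fin n → ℂ := fun j => if j ∈ s then u j else 1
  let γm : Fin n → ℂ := fun j => if j ∈ s then u j else -1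
  have hNp : (fun j k => if k = π j then γp j else 0) ∈ CdssGen n :=
    ⟨π, γp, fun j => by by_cases h : j ∈ s <;> simp [γp, h, hu], rfl⟩
  have hNm : (fun j k => if k = π j then γm j else 0) ∈ CdssGen n :=
    ⟨π, γm, fun j => by by_cases h : j ∈ s <;> simp [γm, h, hu], rfl⟩
  have key : (fun j k => if j ∈ s ∧ k = f j then u j else 0) =
      (1/2 : ℝ) • (fun j k => if k = π j then γp j else 0) +
      (1/2 : ℝ) • (fun j k => if k = π j then γm j else 0) := by
    funext j k
    show (if j ∈ s ∧ k = f j then u j else 0) =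
      (1/2 : ℝ) • (if k = π j then γp j else 0) + (1/2 : ℝ) • (if k = π j then γm j else 0)
    by_cases hj : j ∈ s
    · rw [hπ j hj]
      by_cases hk : k = f j <;> simp [γp, γm, hj, hk] <;> ring
    · have : ¬(j ∈ s ∧ k = f j) := fun h => hj h.1
      rw [if_neg this]
      by_cases hk : k = π j <;> simp [γp, γm, hj, hk]
  rw [key]
  exact (convex_convexHull ℝ (CdssGen n)) (subset_convexHull ℝ _ hNp)
    (subset_convexHull ℝ _ hNm) (by norm_num) (by norm_num) (by norm_num)

theorem stmt_11 (n : ℕ) (M : Matrix (Fin n) (Fin n) ℂ) :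
    IsCdss M ↔
      M ∈ convexHull ℝ
        {N : Matrix (Fin n) (Fin n) ℂ |
          ∃ (π : Equiv.Perm (Fin n)) (γ : Fin n → ℂ),
            (∀ j, ‖γ j‖ = 1) ∧ N = fun j k => if k = π j then γ j else 0} := by
  classical
  constructor
  · intro hM
    show M ∈ convexHull ℝ (CdssGen n)
    -- the real matrix of absolute values, embedded into a doubly stochastic matrix
    set r : Fin n → ℝ := fun i => ∑ k, ‖M i k‖ with hr
    set c : Fin n → ℝ := fun j => ∑ k, ‖M k j‖ with hc
    let T : Matrix (Fin n ⊕ Fin n) (Fin n ⊕ Fin n) ℝ := fun i j =>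
      match i, j with
      | Sum.inl i, Sum.inl j => ‖M i j‖
      | Sum.inl i, Sum.inr j => if i = j then 1 - r i else 0
      | Sum.inr i, Sum.inl j => if i = j then 1 - c i else 0
      | Sum.inr i, Sum.inr j => ‖M j i‖
    have hT : T ∈ doublyStochastic ℝ (Fin n ⊕ Fin n) := by
      rw [mem_doublyStochastic_iff_sum]
      refine ⟨?_, ?_, ?_⟩
      · rintro (i | i) (j | j) <;> dsimp only [T]
        · positivity
        · split
          · linarith [hM.1 i]
          · exact le_rfl
        · split
          · linarith [hM.2 i]
          · exact le_rfl
        · positivity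
      · rintro (i | i) <;> rw [Fintype.sum_sum_type] <;> dsimp only [T] <;>
          simp [Finset.sum_ite_eq, hr, hc]
      · rintro (j | j) <;> rw [Fintype.sum_sum_type] <;> dsimp only [T] <;>
          simp [Finset.sum_ite_eq', hr, hc, eq_comm]
    obtain ⟨w, hw0, hw1, hwT⟩ := exists_eq_sum_perm_of_mem_doublyStochastic hT
    -- phases
    let u : Fin n → Fin n → ℂ := fun j k => if M j k = 0 then 1 else M j k / (‖M j k‖ : ℂ)
    have hu1 : ∀ j k, ‖u j k‖ = 1 := by
      intro j k
      by_cases h : M j k = 0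
      · simp [u, h]
      · have h0 : ‖M j k‖ ≠ 0 := norm_ne_zero_iff.mpr h
        simp only [u, if_neg h, norm_div, Complex.norm_real, norm_norm]
        rw [div_self h0]
    have huM : ∀ j k, (‖M j k‖ : ℂ) * u j k = M j k := by
      intro j k
      by_cases h : M j k = 0
      · simp [u, h]
      · have h0 : (‖M j k‖ : ℂ) ≠ 0 := Complex.ofReal_ne_zero.mpr (norm_ne_zero_iff.mpr h)
        simp only [u, if_neg h]
        rw [mul_comm, div_mul_cancel₀ _ h0]
    -- key: entries of |M| as a combination of permutation indicators
    have hkey : ∀ j k, ‖M j k‖ = ∑ σ : Equiv.Perm (Fin n ⊕ Fin n),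
        w σ * (if σ (Sum.inl j) = Sum.inl k then 1 else 0) := by
      intro j k
      have h1 : T (Sum.inl j) (Sum.inl k) = ‖M j k‖ := rfl
      have h2 := congrFun (congrFun hwT (Sum.inl j)) (Sum.inl k)
      rw [Matrix.sum_apply] at h2
      rw [← h1, ← h2]
      refine Finset.sum_congr rfl fun σ _ => ?_
      simp only [Matrix.smul_apply, Equiv.Perm.permMatrix, PEquiv.toMatrix_apply,
        Equiv.toPEquiv_apply, Option.mem_def, Option.some.injEq, smul_eq_mul, mul_ite,
        mul_one, mul_zero]
    -- the partial complex permutation matrices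
    let Q : Equiv.Perm (Fin n ⊕ Fin n) → Matrix (Fin n) (Fin n) ℂ := fun σ j k =>
      if σ (Sum.inl j) = Sum.inl k then u j k else 0
    have hMQ : M = ∑ σ : Equiv.Perm (Fin n ⊕ Fin n), w σ • Q σ := by
      funext j k
      rw [Matrix.sum_apply]
      have : ∀ σ : Equiv.Perm (Fin n ⊕ Fin n), (w σ • Q σ) j k =
          ((w σ * (if σ (Sum.inl j) = Sum.inl k then 1 else 0) : ℝ) : ℂ) * u j k := by
        intro σ
        by_cases h : σ (Sum.inl j) = Sum.inl k <;>
          (rw [Matrix.smul_apply]; simp [Q, h, Matrix.smul_apply, Complex.real_smul])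
      simp_rw [this, ← Finset.sum_mul, ← Complex.ofReal_sum, ← hkey j k, huM j k]
    rw [hMQ]
    refine (convex_convexHull ℝ (CdssGen n)).sum_mem (fun σ _ => hw0 σ) hw1 (fun σ _ => ?_)
    -- each Q σ is a partial complex permutation matrix
    let s : Finset (Fin n) := Finset.univ.filter (fun j => (σ (Sum.inl j)).isLeft)
    let f : Fin n → Fin n := fun j => Sum.elim id (fun _ => j) (σ (Sum.inl j))
    have hsf : ∀ j k, σ (Sum.inl j) = Sum.inl k ↔ (j ∈ s ∧ k = f j) := by
      intro j k
      constructor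
      · intro h
        refine ⟨by simp [s, h], ?_⟩
        simp [f, h]
      · rintro ⟨hj, rfl⟩
        simp only [s, Finset.mem_filter, Finset.mem_univ, true_and] at hj
        rcases hσ : σ (Sum.inl j) with a | a
        · simp [f, hσ]
        · rw [hσ] at hj; simp at hj
    have hfinj : Set.InjOn f s := by
      intro a ha b hb hab
      have h1 : σ (Sum.inl a) = Sum.inl (f a) := (hsf a (f a)).mpr ⟨ha, rfl⟩
      have h2 : σ (Sum.inl b) = Sum.inl (f b) := (hsf b (f b)).mpr ⟨hb, rfl⟩
      have := σ.injective (h1.trans (by rw [hab, ← h2]))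
      exact Sum.inl.inj this
    have hQ : Q σ = fun j k => if j ∈ s ∧ k = f j then u j (f j) else 0 := by
      funext j k
      show (if σ (Sum.inl j) = Sum.inl k then u j k else 0) = _
      by_cases h : σ (Sum.inl j) = Sum.inl k
      · obtain ⟨hj, hk⟩ := (hsf j k).mp h
        rw [if_pos h, if_pos ⟨hj, hk⟩, hk]
      · rw [if_neg h, if_neg (fun hc => h ((hsf j k).mpr hc))]
    rw [hQ]
    exact partial_mem_hull s f hfinj (fun j => u j (f j)) (fun j => hu1 j (f j))
  · -- easy direction: the hull consists of cdss matrices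
    intro hM
    have hsub : CdssGen n ⊆ {N | IsCdss N} := by
      rintro N ⟨π, γ, hγ, rfl⟩
      constructor
      · intro i
        simp only [apply_ite norm, norm_zero]
        rw [Finset.sum_ite_eq' Finset.univ (π i) (fun _ => ‖γ i‖)]
        simp [hγ]
      · intro j
        have : ∀ i : Fin n, (if j = π i then ‖γ i‖ else 0) =
            (if i = π.symm j then ‖γ i‖ else 0) := by
          intro i
          by_cases h : j = π i
          · rw [if_pos h, if_pos (by rw [h, Equiv.symm_apply_apply])]
          · rw [if_neg h, if_neg (fun hc => h (by rw [hc, Equiv.apply_symm_apply]))]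
        simp only [apply_ite norm, norm_zero, this]
        rw [Finset.sum_ite_eq' Finset.univ (π.symm j) (fun i => ‖γ i‖)]
        simp [hγ]
    have hconv : Convex ℝ {N : Matrix (Fin n) (Fin n) ℂ | IsCdss N} := by
      rintro A hA B hB a b ha hb hab
      constructor
      · intro i
        calc ∑ j, ‖(a • A + b • B) i j‖ ≤ ∑ j, (a * ‖A i j‖ + b * ‖B i j‖) := by
              refine Finset.sum_le_sum fun j _ => ?_
              show ‖a • A i j + b • B i j‖ ≤ _
              refine (norm_add_le _ _).trans ?_
              rw [norm_smul, norm_smul, Real.norm_eq_abs, Real.norm_eq_abs,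
                abs_of_nonneg ha, abs_of_nonneg hb]
          _ = a * ∑ j, ‖A i j‖ + b * ∑ j, ‖B i j‖ := by
              rw [Finset.sum_add_distrib, Finset.mul_sum, Finset.mul_sum]
          _ ≤ a * 1 + b * 1 := by
              gcongr
              exacts [hA.1 i, hB.1 i]
          _ = 1 := by rw [mul_one, mul_one, hab]
      · intro j
        calc ∑ i, ‖(a • A + b • B) i j‖ ≤ ∑ i, (a * ‖A i j‖ + b * ‖B i j‖) := by
              refine Finset.sum_le_sum fun i _ => ?_
              show ‖a • A i j + b • B i j‖ ≤ _
              refine (norm_add_le _ _).trans ?_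
              rw [norm_smul, norm_smul, Real.norm_eq_abs, Real.norm_eq_abs,
                abs_of_nonneg ha, abs_of_nonneg hb]
          _ = a * ∑ i, ‖A i j‖ + b * ∑ i, ‖B i j‖ := by
              rw [Finset.sum_add_distrib, Finset.mul_sum, Finset.mul_sum]
          _ ≤ a * 1 + b * 1 := by
              gcongr
              exacts [hA.2 j, hB.2 j]
          _ = 1 := by rw [mul_one, mul_one, hab]
    exact convexHull_min hsub hconv hM
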